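/- For all positive semidefinite P, Q ∈ ℝ^{d×d}: 𝓔(Q) = 𝓔(P) (I + (P − Q) 𝓕(Q)) and Φ(P) − Φ(Q) = 𝓔(P) (P − Q) 𝓔(Q)ᵀ. -/

import Mathlib

open Matrix

open scoped MatrixOrder

private lemma aux_unit {d : ℕ} {S X : Matrix (Fin d) (Fin d) ℝ}
    (hS : S.PosSemidef) (hX : X.PosSemidef) : IsUnit (1 + X * S).det := by
  have hs : (CFC.sqrt S) * (CFC.sqrt S) = S := CFC.sqrt_mul_sqrt_self S hS.nonneg
  have hherm : (CFC.sqrt S).conjTranspose = (CFC.sqrt S) := (CFC.sqrt_nonneg S).posSemidef.isHermitian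
  have h2 : (1 : Matrix (Fin d) (Fin d) ℝ) + X * S = 1 + (X * (CFC.sqrt S)) * (CFC.sqrt S) := by
    rw [Matrix.mul_assoc, hs]
  have hdet : (1 + X * S).det = (1 + (CFC.sqrt S) * (X * (CFC.sqrt S))).det := by
    rw [h2, Matrix.det_one_add_mul_comm]
  have hpsd : ((CFC.sqrt S) * X * (CFC.sqrt S)).PosSemidef := by
    have := hX.mul_mul_conjTranspose_same (CFC.sqrt S)
    rwa [hherm] at this
  have hpd : (1 + (CFC.sqrt S) * (X * (CFC.sqrt S))).PosDef := by
    rw [← Matrix.mul_assoc]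
    exact Matrix.PosDef.add_posSemidef Matrix.PosDef.one hpsd
  rw [hdet]
  exact hpd.det_pos.ne'.isUnit

theorem statement3 {d d₀ : ℕ} (hd : 1 ≤ d) (hd₀ : 1 ≤ d₀)
    (A : Matrix (Fin d) (Fin d) ℝ) (B : Matrix (Fin d₀) (Fin d) ℝ)
    (R : Matrix (Fin d) (Fin d) ℝ) (R₀ : Matrix (Fin d₀) (Fin d₀) ℝ)
    (hR : R.PosDef) (hR₀ : R₀.PosDef)
    (S : Matrix (Fin d) (Fin d) ℝ) (hSdef : S = Bᵀ * R₀⁻¹ * B)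
    (Φ E F : Matrix (Fin d) (Fin d) ℝ → Matrix (Fin d) (Fin d) ℝ)
    (hΦ : ∀ P, Φ P = A * (1 + P * S)⁻¹ * P * Aᵀ + R)
    (hE : ∀ P, E P = A * (1 + P * S)⁻¹)
    (hF : ∀ P, F P = S * (1 + P * S)⁻¹)
    (P Q : Matrix (Fin d) (Fin d) ℝ) (hP : P.PosSemidef) (hQ : Q.PosSemidef) :
    E Q = E P * (1 + (P - Q) * F Q) ∧
    Φ P - Φ Q = E P * (P - Q) * (E Q)ᵀ := by
  -- S is PSD
  have hS : S.PosSemidef := by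
    rw [hSdef]
    have := (hR₀.inv.posSemidef).conjTranspose_mul_mul_same B
    simpa using this
  have hSsym : Sᵀ = S := hS.isHermitian
  have hPsym : Pᵀ = P := hP.isHermitian
  have hQsym : Qᵀ = Q := hQ.isHermitian
  have hM : IsUnit (1 + P * S).det := aux_unit hS hP
  have hN : IsUnit (1 + Q * S).det := aux_unit hS hQ
  have hN' : IsUnit (1 + S * Q).det := by
    rwa [Matrix.det_one_add_mul_comm] at hN
  -- key: transpose of N⁻¹
  have htr : ((1 + Q * S)⁻¹)ᵀ = (1 + S * Q)⁻¹ := by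
    rw [Matrix.transpose_nonsing_inv, Matrix.transpose_add, Matrix.transpose_one,
      Matrix.transpose_mul, hSsym, hQsym]
  -- commuting identity
  have hcomm : (1 + Q * S)⁻¹ * Q = Q * (1 + S * Q)⁻¹ := by
    have h : Q * (1 + S * Q) = (1 + Q * S) * Q := by noncomm_ring
    calc (1 + Q * S)⁻¹ * Q
        = (1 + Q * S)⁻¹ * (Q * (1 + S * Q)) * (1 + S * Q)⁻¹ := by
          rw [Matrix.mul_assoc (1 + Q * S)⁻¹, Matrix.mul_assoc,
            Matrix.mul_nonsing_inv _ hN', Matrix.mul_one]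
      _ = Q * (1 + S * Q)⁻¹ := by
          rw [h, ← Matrix.mul_assoc, Matrix.nonsing_inv_mul _ hN, Matrix.one_mul]
  constructor
  · rw [hE, hE, hF]
    have key : (1 : Matrix (Fin d) (Fin d) ℝ) + (P - Q) * (S * (1 + Q * S)⁻¹)
        = (1 + P * S) * (1 + Q * S)⁻¹ := by
      have h1 : (1 : Matrix (Fin d) (Fin d) ℝ) + P * S = (1 + Q * S) + (P - Q) * S := by
        noncomm_ring
      rw [h1, Matrix.add_mul, Matrix.mul_nonsing_inv _ hN, Matrix.mul_assoc]
    rw [key, ← Matrix.mul_assoc, Matrix.mul_assoc A, Matrix.nonsing_inv_mul _ hM,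
      Matrix.mul_one]
  · rw [hΦ, hΦ, hE, hE]
    have hX : (1 + P * S) * ((1 + P * S)⁻¹ * P - (1 + Q * S)⁻¹ * Q) * (1 + S * Q)
        = P - Q := by
      rw [Matrix.mul_sub, ← Matrix.mul_assoc, Matrix.mul_nonsing_inv _ hM, Matrix.one_mul,
        hcomm, Matrix.sub_mul, Matrix.mul_assoc _ (Q * (1 + S * Q)⁻¹), Matrix.mul_assoc Q,
        Matrix.nonsing_inv_mul _ hN', Matrix.mul_one]
      noncomm_ring
    have key : (1 + P * S)⁻¹ * P - (1 + Q * S)⁻¹ * Q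
        = (1 + P * S)⁻¹ * (P - Q) * (1 + S * Q)⁻¹ := by
      calc (1 + P * S)⁻¹ * P - (1 + Q * S)⁻¹ * Q
          = (1 + P * S)⁻¹ * ((1 + P * S) * ((1 + P * S)⁻¹ * P - (1 + Q * S)⁻¹ * Q)
              * (1 + S * Q)) * (1 + S * Q)⁻¹ := by
            rw [← Matrix.mul_assoc, ← Matrix.mul_assoc, Matrix.nonsing_inv_mul _ hM,
              Matrix.one_mul, Matrix.mul_assoc _ (1 + S * Q), Matrix.mul_nonsing_inv _ hN',
              Matrix.mul_one]
        _ = (1 + P * S)⁻¹ * (P - Q) * (1 + S * Q)⁻¹ := by rw [hX, Matrix.mul_assoc]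
    have hsplit : A * (1 + P * S)⁻¹ * P * Aᵀ + R - (A * (1 + Q * S)⁻¹ * Q * Aᵀ + R)
        = A * ((1 + P * S)⁻¹ * P - (1 + Q * S)⁻¹ * Q) * Aᵀ := by
      noncomm_ring
    rw [hsplit, key, Matrix.transpose_mul, htr]
    noncomm_ring
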